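/- In the enveloping algebra U(gl_M), the Capelli determinant C(u) = Σ_{σ ∈ S_M} sgn(σ) ∏→_{1≤i≤M} ((u + i - M)δ^{σ(i)}_i - E^{σ(i)}_i) (ordered product over increasing i) is central, and it acts on the irreducible highest weight module V_μ with highest weight μ = (μ₁ ≥ ⋯ ≥ μ_M) ∈ ℤ^M as the scalar ∏_{i=1}^M (u - μ_i + i - M). -/

import Mathlib

noncomputable section

def capelli (M : ℕ) {A : Type*} [Ring A] [Algebra ℂ A] (u : ℂ)
    (E : Fin M → Fin M → A) : A :=
  ∑ σ : Equiv.Perm (Fin M),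
    ((Equiv.Perm.sign σ : ℤ) •
      ((List.finRange M).map fun i =>
        (if σ i = i then algebraMap ℂ A (u + (i : ℕ) + 1 - M) else 0) - E (σ i) i).prod)

namespace Cap13

variable {M : ℕ} {A : Type*} [Ring A] [Algebra ℂ A]

/-- entry of the shifted matrix, row `a`, column value `b`, column position `k` -/
def ent (u : ℂ) (E : Fin M → Fin M → A) (a b k : Fin M) : A :=
  (if a = b then algebraMap ℂ A (u + (k : ℕ) + 1 - M) else 0) - E a b

/-- ordered product of entries -/
def Pfn (u : ℂ) (E : Fin M → Fin M → A) (f g : Fin M → Fin M) : A :=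
  ((List.finRange M).map fun k => ent u E (f k) (g k) k).prod

/-- generalized column determinant -/
def DetE (u : ℂ) (E : Fin M → Fin M → A) (f g : Fin M → Fin M) : A :=
  ∑ s : Equiv.Perm (Fin M), ((Equiv.Perm.sign s : ℤ) • Pfn u E (fun k => f (s k)) g)

lemma capelli_eq_det (u : ℂ) (E : Fin M → Fin M → A) :
    capelli M u E = DetE u E id id := rfl

/- ---------- list helpers ---------- -/

lemma mem_take_finRange {n : ℕ} {k : Fin M} :
    k ∈ (List.finRange M).take n ↔ (k : ℕ) < n := by
  rw [List.mem_iff_getElem]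
  constructor
  · rintro ⟨i, hi, hk⟩
    have h1 : i < n := lt_of_lt_of_le hi (by simp [List.length_take])
    have h2 : i < M := lt_of_lt_of_le hi (by simp [List.length_take])
    rw [List.getElem_take, List.getElem_finRange] at hk
    have : (k : ℕ) = i := by rw [← hk]; rfl
    omega
  · intro h
    refine ⟨(k : ℕ), by simp [List.length_take]; omega, ?_⟩
    rw [List.getElem_take, List.getElem_finRange]
    exact Fin.ext rfl

lemma mem_drop_finRange {n : ℕ} {k : Fin M} :
    k ∈ (List.finRange M).drop n ↔ n ≤ (k : ℕ) := by
  rw [List.mem_iff_getElem]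
  constructor
  · rintro ⟨i, hi, hk⟩
    have h2 : n + i < M := by
      have := hi; simp [List.length_drop] at this; omega
    rw [List.getElem_drop, List.getElem_finRange] at hk
    have : (k : ℕ) = n + i := by rw [← hk]; rfl
    omega
  · intro h
    have h2 : (k : ℕ) - n < (List.drop n (List.finRange M)).length := by
      simp [List.length_drop]; omega
    refine ⟨(k : ℕ) - n, h2, ?_⟩
    rw [List.getElem_drop, List.getElem_finRange]
    exact Fin.ext (by simp; omega)

lemma finRange_drop_cons (i : Fin M) :
    (List.finRange M).drop (i : ℕ) = i :: (List.finRange M).drop ((i : ℕ) + 1) := by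
  rw [List.drop_eq_getElem_cons (by simpa using i.isLt)]
  congr 1
  rw [List.getElem_finRange]
  exact Fin.ext rfl

lemma prod_split (F : Fin M → A) (i : Fin M) :
    ((List.finRange M).map F).prod =
      (((List.finRange M).take (i : ℕ)).map F).prod * F i *
        (((List.finRange M).drop ((i : ℕ) + 1)).map F).prod := by
  conv_lhs => rw [← List.take_append_drop (i : ℕ) (List.finRange M)]
  rw [List.map_append, List.prod_append, finRange_drop_cons, List.map_cons, List.prod_cons,
    mul_assoc]

lemma take_map_congr (F G : Fin M → A) (n : ℕ) (h : ∀ k : Fin M, (k : ℕ) < n → F k = G k) :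
    ((List.finRange M).take n).map F = ((List.finRange M).take n).map G :=
  List.map_congr_left fun k hk => h k (mem_take_finRange.1 hk)

lemma drop_map_congr (F G : Fin M → A) (n : ℕ) (h : ∀ k : Fin M, n ≤ (k : ℕ) → F k = G k) :
    ((List.finRange M).drop n).map F = ((List.finRange M).drop n).map G :=
  List.map_congr_left fun k hk => h k (mem_drop_finRange.1 hk)

lemma prod_split2 (F : Fin M → A) (i i' : Fin M) (h : (i' : ℕ) = (i : ℕ) + 1) :
    ((List.finRange M).map F).prod =
      (((List.finRange M).take (i : ℕ)).map F).prod * (F i * F i') *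
        (((List.finRange M).drop ((i : ℕ) + 2)).map F).prod := by
  rw [prod_split F i]
  have : (List.finRange M).drop ((i : ℕ) + 1) = i' :: (List.finRange M).drop ((i : ℕ) + 2) := by
    rw [← h, finRange_drop_cons i', h]
  rw [this, List.map_cons, List.prod_cons]
  noncomm_ring

-- telescoping commutator expansion
lemma comm_expand (F : Fin M → A) (y : A) :
    ((List.finRange M).map F).prod * y - y * ((List.finRange M).map F).prod =
      ∑ k : Fin M,
        (((List.finRange M).take (k : ℕ)).map F).prod * (F k * y - y * F k) *
          (((List.finRange M).drop ((k : ℕ) + 1)).map F).prod := by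
  have key : ∀ k : Fin M,
      (((List.finRange M).take (k : ℕ)).map F).prod * (F k * y - y * F k) *
          (((List.finRange M).drop ((k : ℕ) + 1)).map F).prod =
        (fun j => (((List.finRange M).take j).map F).prod * y *
          (((List.finRange M).drop j).map F).prod) ((k : ℕ) + 1) -
        (fun j => (((List.finRange M).take j).map F).prod * y *
          (((List.finRange M).drop j).map F).prod) (k : ℕ) := by
    intro k
    simp only
    have hdrop : (List.finRange M).drop (k : ℕ) = k :: (List.finRange M).drop ((k : ℕ) + 1) := by
      rw [List.drop_eq_getElem_cons (by simpa using k.isLt)]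
      congr 1
      rw [List.getElem_finRange]; exact Fin.ext rfl
    have htake : (List.finRange M).take ((k : ℕ) + 1) =
        (List.finRange M).take (k : ℕ) ++ [k] := by
      rw [List.take_succ]
      congr 1
      rw [List.getElem?_eq_getElem (by simpa using k.isLt)]
      rw [List.getElem_finRange]
      rfl
    rw [hdrop, htake]
    simp only [List.map_append, List.map_cons, List.prod_append, List.prod_cons,
      List.map_nil, List.prod_nil]
    noncomm_ring
  rw [Finset.sum_congr rfl (fun k _ => key k)]
  rw [Fin.sum_univ_eq_sum_range
    (fun j => (fun n => (((List.finRange M).take (n+1)).map F).prod * y *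
      (((List.finRange M).drop (n+1)).map F).prod -
      (((List.finRange M).take n).map F).prod * y *
      (((List.finRange M).drop n).map F).prod) j)]
  rw [Finset.sum_range_sub (fun j => (((List.finRange M).take j).map F).prod * y *
      (((List.finRange M).drop j).map F).prod)]
  rw [List.take_of_length_le (by simp), List.drop_eq_nil_of_le (by simp)]
  simp


theorem ringK {R : Type*} [Ring R] (s1 s2 s3 s4 d1 d2 d3 d4 e1 e2 e3 e4 : R)
    (hss12 : s1 * s2 = s2 * s1) (hss34 : s3 * s4 = s4 * s3)
    (hs12 : s1 * d2 = s2 * d1) (hs43 : s4 * d3 = s3 * d4)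
    (hc1 : e2 * s1 = s1 * e2) (hc2 : e1 * s2 = s2 * e1)
    (hc3 : e4 * s3 = s3 * e4) (hc4 : e3 * s4 = s4 * e3)
    (hd1 : e2 * d1 = d1 * e2) (hd2 : e1 * d2 = d2 * e1)
    (hd3 : e4 * d3 = d3 * e4) (hd4 : e3 * d4 = d4 * e3)
    (h12 : e1 * e2 - e2 * e1 = d3 * e4 - d4 * e3)
    (h43 : e4 * e3 - e3 * e4 = d2 * e1 - d1 * e2) :
    (s1 - e1) * ((s2 - e2) + d2) - (s3 - e3) * ((s4 - e4) + d4)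
      + (s4 - e4) * ((s3 - e3) + d3) - (s2 - e2) * ((s1 - e1) + d1) = 0 := by
  linear_combination (norm := noncomm_ring) hss12 - hss34 + hs12 + hs43 + hc1 - hc2 - hc3 + hc4
    + hd1 - hd2 - hd3 + hd4 + h12 + h43

lemma scal_comm (P : Prop) [Decidable P] (z : ℂ) (x : A) :
    (if P then algebraMap ℂ A z else 0) * x = x * (if P then algebraMap ℂ A z else 0) := by
  split
  · exact (Algebra.commutes z x).symm ▸ (Algebra.commutes z x)
  · simp

lemma half_cancel {x : A} (h : x + x = 0) : x = 0 := by
  have h2 : (2 : ℂ) • x = 0 := by rw [two_smul]; exact h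
  calc x = ((2 : ℂ)⁻¹ * 2) • x := by norm_num
  _ = (2 : ℂ)⁻¹ • ((2 : ℂ) • x) := by rw [mul_smul]
  _ = 0 := by rw [h2, smul_zero]



variable (u : ℂ) (E : Fin M → Fin M → A)

lemma ent_succ (a b i i' : Fin M) (hii' : (i' : ℕ) = (i : ℕ) + 1) :
    ent u E a b i' = ent u E a b i + (if a = b then (1 : A) else 0) := by
  have hz : (u + (i' : ℕ) + 1 - M : ℂ) = (u + (i : ℕ) + 1 - M) + 1 := by
    rw [hii']; push_cast; ring
  unfold ent
  split
  · rw [hz, map_add, map_one]; noncomm_ring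
  · noncomm_ring

lemma middleK (hE : ∀ i j p q : Fin M,
    E i j * E p q - E p q * E i j =
      (if p = j then E i q else 0) - (if i = q then E p j else 0))
    (a a' b b' i i' : Fin M) (hii' : (i' : ℕ) = (i : ℕ) + 1) :
    ent u E a b i * ent u E a' b' i' - ent u E a' b i * ent u E a b' i'
      + ent u E a b' i * ent u E a' b i' - ent u E a' b' i * ent u E a b i' = 0 := by
  rw [ent_succ u E a' b' i i' hii', ent_succ u E a b' i i' hii',
    ent_succ u E a' b i i' hii', ent_succ u E a b i i' hii']
  exact ringK
    (if a = b then algebraMap ℂ A (u + (i : ℕ) + 1 - M) else 0)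
    (if a' = b' then algebraMap ℂ A (u + (i : ℕ) + 1 - M) else 0)
    (if a' = b then algebraMap ℂ A (u + (i : ℕ) + 1 - M) else 0)
    (if a = b' then algebraMap ℂ A (u + (i : ℕ) + 1 - M) else 0)
    (if a = b then (1:A) else 0) (if a' = b' then (1:A) else 0)
    (if a' = b then (1:A) else 0) (if a = b' then (1:A) else 0)
    (E a b) (E a' b') (E a' b) (E a b')
    (scal_comm _ _ _) (scal_comm _ _ _)
    (by split_ifs <;> simp)
    (by split_ifs <;> simp)
    ((scal_comm _ _ _).symm) ((scal_comm _ _ _).symm)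
    ((scal_comm _ _ _).symm) ((scal_comm _ _ _).symm)
    (by split_ifs <;> simp) (by split_ifs <;> simp)
    (by split_ifs <;> simp) (by split_ifs <;> simp)
    (by rw [hE a b a' b']; congr 1 <;> (split_ifs <;> simp))
    (by rw [hE a b' a' b]; congr 1 <;> (split_ifs <;> simp))

lemma adjSwap (hE : ∀ i j p q : Fin M,
    E i j * E p q - E p q * E i j =
      (if p = j then E i q else 0) - (if i = q then E p j else 0))
    (f g : Fin M → Fin M) (i i' : Fin M) (hii' : (i' : ℕ) = (i : ℕ) + 1) :
    DetE u E f (g ∘ Equiv.swap i i') = - DetE u E f g := by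
  set τ := Equiv.swap i i' with hτ
  have hne : i ≠ i' := fun h => by rw [h] at hii'; omega
  have hτfix : ∀ k : Fin M, (k : ℕ) ≠ (i : ℕ) → (k : ℕ) ≠ (i' : ℕ) → τ k = k := fun k h1 h2 =>
    Equiv.swap_apply_of_ne_of_ne (fun h => h1 (by rw [h])) (fun h => h2 (by rw [h]))
  have key : ∀ s : Equiv.Perm (Fin M),
      Pfn u E (fun k => f (s k)) g - Pfn u E (fun k => f ((s * τ) k)) g
        + (Pfn u E (fun k => f (s k)) (g ∘ τ) - Pfn u E (fun k => f ((s * τ) k)) (g ∘ τ)) = 0 := by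
    intro s
    have hsτ : ∀ k : Fin M, (k : ℕ) ≠ (i : ℕ) → (k : ℕ) ≠ (i' : ℕ) → (s * τ) k = s k := by
      intro k h1 h2
      rw [Equiv.Perm.mul_apply, hτfix k h1 h2]
    have hgτ : ∀ k : Fin M, (k : ℕ) ≠ (i : ℕ) → (k : ℕ) ≠ (i' : ℕ) → (g ∘ τ) k = g k := by
      intro k h1 h2
      simp only [Function.comp_apply, hτfix k h1 h2]
    set F1 : Fin M → A := fun k => ent u E (f (s k)) (g k) k with hF1
    have congrTake : ∀ (h1 h2 : Fin M → Fin M),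
        (∀ k : Fin M, (k:ℕ) < (i:ℕ) → h1 k = s k) → (∀ k : Fin M, (k:ℕ) < (i:ℕ) → h2 k = g k) →
        ((List.finRange M).take (i : ℕ)).map (fun k => ent u E (f (h1 k)) (h2 k) k) =
          ((List.finRange M).take (i : ℕ)).map F1 := by
      intro h1 h2 hh1 hh2
      exact take_map_congr _ _ _ (fun k hk => by rw [hh1 k hk, hh2 k hk])
    have congrDrop : ∀ (h1 h2 : Fin M → Fin M),
        (∀ k : Fin M, (i:ℕ) + 2 ≤ (k:ℕ) → h1 k = s k) → (∀ k : Fin M, (i:ℕ)+2 ≤ (k:ℕ) → h2 k = g k) →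
        ((List.finRange M).drop ((i : ℕ) + 2)).map (fun k => ent u E (f (h1 k)) (h2 k) k) =
          ((List.finRange M).drop ((i : ℕ) + 2)).map F1 := by
      intro h1 h2 hh1 hh2
      exact drop_map_congr _ _ _ (fun k hk => by rw [hh1 k hk, hh2 k hk])
    have e1 : Pfn u E (fun k => f (s k)) g =
        (((List.finRange M).take (i:ℕ)).map F1).prod *
          (ent u E (f (s i)) (g i) i * ent u E (f (s i')) (g i') i') *
          (((List.finRange M).drop ((i:ℕ)+2)).map F1).prod := by
      simp only [Pfn]
      rw [prod_split2 _ i i' hii']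
    have e2 : Pfn u E (fun k => f ((s*τ) k)) g =
        (((List.finRange M).take (i:ℕ)).map F1).prod *
          (ent u E (f (s i')) (g i) i * ent u E (f (s i)) (g i') i') *
          (((List.finRange M).drop ((i:ℕ)+2)).map F1).prod := by
      simp only [Pfn]
      rw [prod_split2 _ i i' hii']
      rw [congrTake (fun k => (s*τ) k) g (fun k hk => hsτ k (by omega) (by omega)) (fun _ _ => rfl)]
      rw [congrDrop (fun k => (s*τ) k) g (fun k hk => hsτ k (by omega) (by omega)) (fun _ _ => rfl)]
      have hi : (s * τ) i = s i' := by rw [Equiv.Perm.mul_apply, hτ, Equiv.swap_apply_left]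
      have hi'2 : (s * τ) i' = s i := by rw [Equiv.Perm.mul_apply, hτ, Equiv.swap_apply_right]
      rw [hi, hi'2]
    have e3 : Pfn u E (fun k => f (s k)) (g ∘ τ) =
        (((List.finRange M).take (i:ℕ)).map F1).prod *
          (ent u E (f (s i)) (g i') i * ent u E (f (s i')) (g i) i') *
          (((List.finRange M).drop ((i:ℕ)+2)).map F1).prod := by
      simp only [Pfn]
      rw [prod_split2 _ i i' hii']
      rw [congrTake s (g ∘ τ) (fun _ _ => rfl) (fun k hk => hgτ k (by omega) (by omega))]
      rw [congrDrop s (g ∘ τ) (fun _ _ => rfl) (fun k hk => hgτ k (by omega) (by omega))]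
      have h1 : (g ∘ τ) i = g i' := by simp [hτ, Equiv.swap_apply_left]
      have h2 : (g ∘ τ) i' = g i := by simp [hτ, Equiv.swap_apply_right]
      rw [h1, h2]
    have e4 : Pfn u E (fun k => f ((s*τ) k)) (g ∘ τ) =
        (((List.finRange M).take (i:ℕ)).map F1).prod *
          (ent u E (f (s i')) (g i') i * ent u E (f (s i)) (g i) i') *
          (((List.finRange M).drop ((i:ℕ)+2)).map F1).prod := by
      simp only [Pfn]
      rw [prod_split2 _ i i' hii']
      rw [congrTake (fun k => (s*τ) k) (g ∘ τ)
        (fun k hk => hsτ k (by omega) (by omega)) (fun k hk => hgτ k (by omega) (by omega))]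
      rw [congrDrop (fun k => (s*τ) k) (g ∘ τ)
        (fun k hk => hsτ k (by omega) (by omega)) (fun k hk => hgτ k (by omega) (by omega))]
      have hi : (s * τ) i = s i' := by rw [Equiv.Perm.mul_apply, hτ, Equiv.swap_apply_left]
      have hi'2 : (s * τ) i' = s i := by rw [Equiv.Perm.mul_apply, hτ, Equiv.swap_apply_right]
      have h1 : (g ∘ τ) i = g i' := by simp [hτ, Equiv.swap_apply_left]
      have h2 : (g ∘ τ) i' = g i := by simp [hτ, Equiv.swap_apply_right]
      rw [hi, hi'2, h1, h2]
    rw [e1, e2, e3, e4]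
    have h0 := middleK u E hE (f (s i)) (f (s i')) (g i) (g i') i i' hii'
    set T := (((List.finRange M).take (i:ℕ)).map F1).prod
    set Dr := (((List.finRange M).drop ((i:ℕ)+2)).map F1).prod
    calc T * (ent u E (f (s i)) (g i) i * ent u E (f (s i')) (g i') i') * Dr
          - T * (ent u E (f (s i')) (g i) i * ent u E (f (s i)) (g i') i') * Dr
          + (T * (ent u E (f (s i)) (g i') i * ent u E (f (s i')) (g i) i') * Dr
          - T * (ent u E (f (s i')) (g i') i * ent u E (f (s i)) (g i) i') * Dr)
        = T * (ent u E (f (s i)) (g i) i * ent u E (f (s i')) (g i') i'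
            - ent u E (f (s i')) (g i) i * ent u E (f (s i)) (g i') i'
            + ent u E (f (s i)) (g i') i * ent u E (f (s i')) (g i) i'
            - ent u E (f (s i')) (g i') i * ent u E (f (s i)) (g i) i') * Dr := by noncomm_ring
      _ = 0 := by rw [h0]; simp
  -- sign of s * τ
  have hsgn : ∀ s : Equiv.Perm (Fin M),
      ((Equiv.Perm.sign (s * τ) : ℤ)) = -((Equiv.Perm.sign s : ℤ)) := by
    intro s
    rw [Equiv.Perm.sign_mul, hτ, Equiv.Perm.sign_swap hne]
    push_cast
    ring
  have reindex : ∀ g' : Fin M → Fin M,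
      ∑ s : Equiv.Perm (Fin M), ((Equiv.Perm.sign s : ℤ) • Pfn u E (fun k => f ((s * τ) k)) g')
        = - DetE u E f g' := by
    intro g'
    have hc := Equiv.sum_comp (Equiv.mulRight τ)
      (fun s : Equiv.Perm (Fin M) => ((Equiv.Perm.sign s : ℤ) • Pfn u E (fun k => f (s k)) g'))
    simp only [Equiv.coe_mulRight] at hc
    have : ∑ s : Equiv.Perm (Fin M),
        ((Equiv.Perm.sign (s * τ) : ℤ) • Pfn u E (fun k => f ((s * τ) k)) g') = DetE u E f g' := hc
    rw [← this]
    rw [← Finset.sum_neg_distrib]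
    refine Finset.sum_congr rfl fun s _ => ?_
    rw [hsgn s, neg_smul, neg_neg]
  have main : DetE u E f g + DetE u E f g + (DetE u E f (g ∘ τ) + DetE u E f (g ∘ τ)) = 0 := by
    have hsum : ∑ s : Equiv.Perm (Fin M), ((Equiv.Perm.sign s : ℤ) •
        (Pfn u E (fun k => f (s k)) g - Pfn u E (fun k => f ((s * τ) k)) g
          + (Pfn u E (fun k => f (s k)) (g ∘ τ) - Pfn u E (fun k => f ((s * τ) k)) (g ∘ τ)))) = 0 := by
      rw [Finset.sum_congr rfl (fun s _ => by rw [key s, smul_zero])]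
      simp
    simp only [smul_add, smul_sub, Finset.sum_add_distrib, Finset.sum_sub_distrib] at hsum
    rw [reindex g, reindex (g ∘ τ)] at hsum
    have hDg : ∑ s : Equiv.Perm (Fin M), ((Equiv.Perm.sign s : ℤ) • Pfn u E (fun k => f (s k)) g)
        = DetE u E f g := rfl
    have hDgτ : ∑ s : Equiv.Perm (Fin M),
        ((Equiv.Perm.sign s : ℤ) • Pfn u E (fun k => f (s k)) (g ∘ τ)) = DetE u E f (g ∘ τ) := rfl
    rw [hDg, hDgτ] at hsum
    rw [sub_neg_eq_add, sub_neg_eq_add] at hsum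
    exact hsum
  have half := half_cancel (x := DetE u E f g + DetE u E f (g ∘ τ)) (by
    abel_nf
    abel_nf at main
    exact main)
  exact (neg_eq_of_add_eq_zero_right half).symm

lemma det_col_repeat (hE : ∀ i j p q : Fin M,
    E i j * E p q - E p q * E i j =
      (if p = j then E i q else 0) - (if i = q then E p j else 0))
    (f : Fin M → Fin M) :
    ∀ (d : ℕ) (g : Fin M → Fin M) (i j : Fin M),
      (j : ℕ) - (i : ℕ) = d → (i : ℕ) < (j : ℕ) → g i = g j → DetE u E f g = 0 := by
  intro d
  induction d using Nat.strong_induction_on with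
  | _ d ih =>
    intro g i j hd hij hg
    by_cases h1 : (j : ℕ) = (i : ℕ) + 1
    · -- adjacent columns
      have hgτ : g ∘ Equiv.swap i j = g := by
        funext k
        simp only [Function.comp_apply, Equiv.swap_apply_def]
        split_ifs with hki hkj
        · rw [hki, hg]
        · rw [hkj, hg]
        · rfl
      have h2 := adjSwap u E hE f g i j h1
      rw [hgτ] at h2
      exact half_cancel (by nth_rewrite 2 [h2]; simp)
    · -- non-adjacent : move the right column inward
      have hjpos : 0 < (j : ℕ) := by omega
      set j1 : Fin M := ⟨(j : ℕ) - 1, by omega⟩ with hj1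
      have hadj : (j : ℕ) = (j1 : ℕ) + 1 := by simp [hj1]; omega
      have h2 := adjSwap u E hE f g j1 j hadj
      set g' := g ∘ Equiv.swap j1 j with hg'
      have hgi : g' i = g i := by
        simp only [hg', Function.comp_apply]
        rw [Equiv.swap_apply_of_ne_of_ne]
        · exact fun h => by rw [h] at hij; simp [hj1] at hij; omega
        · exact fun h => by rw [h] at hij; omega
      have hgj1 : g' j1 = g j := by
        simp only [hg', Function.comp_apply, Equiv.swap_apply_left]
      have hz : DetE u E f g' = 0 := by
        refine ih ((j1 : ℕ) - (i : ℕ)) (by omega) g' i j1 rfl (by simp [hj1]; omega) ?_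
        rw [hgi, hgj1, hg]
      rw [hz] at h2
      have : DetE u E f g = 0 := by
        have h3 : -DetE u E f g = 0 := h2.symm
        simpa using h3
      exact this

/-- product with the `k`-th row replaced -/
lemma rowRep (h : Fin M → Fin M) (k x : Fin M) :
    ((List.finRange M).map fun i => ent u E (Function.update h k x i) i i).prod =
      (((List.finRange M).take (k : ℕ)).map fun i => ent u E (h i) i i).prod *
        ent u E x k k *
        (((List.finRange M).drop ((k : ℕ) + 1)).map fun i => ent u E (h i) i i).prod := by
  rw [prod_split (fun i => ent u E (Function.update h k x i) i i) k]
  rw [Function.update_self]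
  rw [take_map_congr _ (fun i => ent u E (h i) i i) _
    (fun i hi => by rw [Function.update_of_ne (by exact fun hc => by rw [hc] at hi; omega)])]
  rw [drop_map_congr _ (fun i => ent u E (h i) i i) _
    (fun i hi => by rw [Function.update_of_ne (by exact fun hc => by rw [hc] at hi; omega)])]

/-- product with the `k`-th column value replaced -/
lemma colRep (σ : Fin M → Fin M) (k x : Fin M) :
    ((List.finRange M).map fun i => ent u E (σ i) (Function.update id k x i) i).prod =
      (((List.finRange M).take (k : ℕ)).map fun i => ent u E (σ i) i i).prod *
        ent u E (σ k) x k *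
        (((List.finRange M).drop ((k : ℕ) + 1)).map fun i => ent u E (σ i) i i).prod := by
  rw [prod_split (fun i => ent u E (σ i) (Function.update id k x i) i) k]
  rw [Function.update_self]
  rw [take_map_congr _ (fun i => ent u E (σ i) i i) _
    (fun i hi => by rw [Function.update_of_ne (by exact fun hc => by rw [hc] at hi; omega)]; rfl)]
  rw [drop_map_congr _ (fun i => ent u E (σ i) i i) _
    (fun i hi => by rw [Function.update_of_ne (by exact fun hc => by rw [hc] at hi; omega)]; rfl)]

lemma ent_comm (hE : ∀ i j p q : Fin M,
    E i j * E p q - E p q * E i j =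
      (if p = j then E i q else 0) - (if i = q then E p j else 0))
    (p q a b k : Fin M) :
    ent u E a b k * E p q - E p q * ent u E a b k =
      (if a = q then E p b else 0) - (if p = b then E a q else 0) := by
  unfold ent
  have hs := scal_comm (a = b) (u + (k : ℕ) + 1 - M) (E p q) (A := A)
  linear_combination (norm := noncomm_ring) hs - hE a b p q

lemma E_as_ent (a b k : Fin M) :
    E a b = (if a = b then algebraMap ℂ A (u + (k : ℕ) + 1 - M) else 0) - ent u E a b k :=
  (sub_sub_cancel _ _).symm

section Central

lemma detE_id (g : Fin M → Fin M) : DetE u E id g =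
    ∑ σ : Equiv.Perm (Fin M), ((Equiv.Perm.sign σ : ℤ)) •
      ((List.finRange M).map fun i => ent u E (σ i) (g i) i).prod := rfl

theorem capelli_comm (hE : ∀ i j p q : Fin M,
    E i j * E p q - E p q * E i j =
      (if p = j then E i q else 0) - (if i = q then E p j else 0)) (p q : Fin M) :
    capelli M u E * E p q - E p q * capelli M u E = 0 := by
  classical
  set Lt : Equiv.Perm (Fin M) → Fin M → A := fun σ k =>
    (((List.finRange M).take (k : ℕ)).map fun i => ent u E (σ i) i i).prod with hLt
  set Rt : Equiv.Perm (Fin M) → Fin M → A := fun σ k =>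
    (((List.finRange M).drop ((k : ℕ) + 1)).map fun i => ent u E (σ i) i i).prod with hRt
  set Pup : (Fin M → Fin M) → A := fun h =>
    ((List.finRange M).map fun i => ent u E (h i) i i).prod with hPup
  -- Step 1: expand the commutator
  have step1 : capelli M u E * E p q - E p q * capelli M u E =
      ∑ σ : Equiv.Perm (Fin M), ∑ k : Fin M, ((Equiv.Perm.sign σ : ℤ)) •
        (Lt σ k *
          ((if σ k = q then E p k else 0) - (if p = k then E (σ k) q else 0)) *
          Rt σ k) := by
    show (∑ σ : Equiv.Perm (Fin M), ((Equiv.Perm.sign σ : ℤ) • Pup (⇑σ))) * E p q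
        - E p q * (∑ σ : Equiv.Perm (Fin M), ((Equiv.Perm.sign σ : ℤ) • Pup (⇑σ))) = _
    rw [Finset.sum_mul, Finset.mul_sum, ← Finset.sum_sub_distrib]
    refine Finset.sum_congr rfl fun σ _ => ?_
    rw [smul_mul_assoc, mul_smul_comm, ← smul_sub]
    have hce := comm_expand (fun i => ent u E (σ i) i i) (E p q) (M := M)
    rw [show Pup (⇑σ) * E p q - E p q * Pup (⇑σ) =
      ((List.finRange M).map fun i => ent u E (σ i) i i).prod * E p q -
        E p q * ((List.finRange M).map fun i => ent u E (σ i) i i).prod from rfl, hce,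
      Finset.smul_sum]
    refine Finset.sum_congr rfl fun k _ => ?_
    simp only [hLt, hRt, ent_comm u E hE p q]
  -- Step 2: rewrite each term
  have step2 : ∀ (σ : Equiv.Perm (Fin M)) (k : Fin M),
      Lt σ k *
          ((if σ k = q then E p k else 0) - (if p = k then E (σ k) q else 0)) *
          Rt σ k =
        ((if σ k = q then (if p = k then
              Lt σ k * algebraMap ℂ A (u + (k : ℕ) + 1 - M) * Rt σ k else 0) else 0)
          - (if σ k = q then Pup (Function.update (⇑σ) k p) else 0))
        - ((if p = k then (if σ k = q then
              Lt σ k * algebraMap ℂ A (u + (k : ℕ) + 1 - M) * Rt σ k else 0) else 0)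
          - (if p = k then Lt σ k * ent u E (σ k) q k * Rt σ k else 0)) := by
    intro σ k
    rw [mul_sub, sub_mul]
    congr 1
    · by_cases h : σ k = q
      · simp only [if_pos h]
        rw [E_as_ent u E p k k, mul_sub, sub_mul]
        congr 1
        · by_cases h2 : p = k <;> simp [h2]
        · exact (rowRep u E (⇑σ) k p).symm
      · simp [h]
    · by_cases h : p = k
      · simp only [if_pos h]
        rw [E_as_ent u E (σ k) q k, mul_sub, sub_mul]
        congr 1
        by_cases h2 : σ k = q <;> simp [h2]
      · simp [h]
  rw [step1, Finset.sum_congr rfl (fun σ _ => Finset.sum_congr rfl fun k _ => by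
    rw [step2 σ k])]
  simp only [smul_sub, Finset.sum_sub_distrib]
  have cancel_c : (∑ σ : Equiv.Perm (Fin M), ∑ k : Fin M, ((Equiv.Perm.sign σ : ℤ)) •
      (if σ k = q then (if p = k then
          Lt σ k * algebraMap ℂ A (u + (k : ℕ) + 1 - M) * Rt σ k else 0) else 0)) =
      (∑ σ : Equiv.Perm (Fin M), ∑ k : Fin M, ((Equiv.Perm.sign σ : ℤ)) •
      (if p = k then (if σ k = q then
          Lt σ k * algebraMap ℂ A (u + (k : ℕ) + 1 - M) * Rt σ k else 0) else 0)) := by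
    refine Finset.sum_congr rfl fun σ _ => Finset.sum_congr rfl fun k _ => ?_
    congr 1
    by_cases h1 : σ k = q <;> by_cases h2 : p = k <;> simp [h1, h2]
  rw [cancel_c, sub_sub_sub_cancel_left]
  -- goal is now  S4 - S2 = 0
  have collapse4 : (∑ σ : Equiv.Perm (Fin M), ∑ k : Fin M, ((Equiv.Perm.sign σ : ℤ)) •
      (if p = k then Lt σ k * ent u E (σ k) q k * Rt σ k else 0)) =
      ∑ σ : Equiv.Perm (Fin M), ((Equiv.Perm.sign σ : ℤ)) •
        ((List.finRange M).map fun i => ent u E (σ i) (Function.update id p q i) i).prod := by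
    refine Finset.sum_congr rfl fun σ _ => ?_
    rw [Finset.sum_eq_single p
      (fun k _ hk => by rw [if_neg (fun h => hk h.symm), smul_zero])
      (fun h => absurd (Finset.mem_univ p) h)]
    rw [if_pos rfl]
    congr 1
    exact (colRep u E (⇑σ) p q).symm
  rw [collapse4]
  rcases eq_or_ne p q with rfl | hpq
  · -- diagonal case : both sums are the Capelli determinant itself
    have hgid : Function.update (id : Fin M → Fin M) p p = id := Function.update_eq_self p id
    rw [hgid]
    have collapse2 : (∑ σ : Equiv.Perm (Fin M), ∑ k : Fin M, ((Equiv.Perm.sign σ : ℤ)) •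
        (if σ k = p then Pup (Function.update (⇑σ) k p) else 0)) =
        ∑ σ : Equiv.Perm (Fin M), ((Equiv.Perm.sign σ : ℤ)) • Pup (⇑σ) := by
      refine Finset.sum_congr rfl fun σ _ => ?_
      rw [Finset.sum_eq_single (σ⁻¹ p)
        (fun k _ hk => by
          rw [if_neg (fun h => hk (by rw [← h, Equiv.Perm.coe_inv, Equiv.symm_apply_apply])), smul_zero])
        (fun h => absurd (Finset.mem_univ _) h)]
      rw [if_pos (c := σ (σ⁻¹ p) = p) (Equiv.apply_symm_apply σ p)]
      have hupd0 : Function.update (⇑σ) (σ⁻¹ p) p = ⇑σ := by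
        have h0 := Function.update_eq_self (σ⁻¹ p) (⇑σ)
        rwa [Equiv.Perm.coe_inv, Equiv.apply_symm_apply] at h0
      rw [hupd0]
    rw [collapse2]
    simp only [id_eq]
    exact sub_self _
  · -- off-diagonal case : both sums vanish
    have hS4 : (∑ σ : Equiv.Perm (Fin M), ((Equiv.Perm.sign σ : ℤ)) •
        ((List.finRange M).map fun i => ent u E (σ i) (Function.update id p q i) i).prod) = 0 := by
      rw [← detE_id]
      have hqp : q ≠ p := hpq.symm
      have hvals : Function.update (id : Fin M → Fin M) p q p = q := Function.update_self p q id
      have hvals2 : Function.update (id : Fin M → Fin M) p q q = q := by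
        rw [Function.update_of_ne hqp]; rfl
      have hpq' : (p : ℕ) ≠ (q : ℕ) := fun h => hpq (Fin.ext h)
      rcases lt_or_gt_of_ne hpq' with hlt | hgt
      · exact det_col_repeat u E hE id ((q : ℕ) - (p : ℕ)) _ p q rfl hlt
          (by rw [hvals, hvals2])
      · exact det_col_repeat u E hE id ((p : ℕ) - (q : ℕ)) _ q p rfl hgt
          (by rw [hvals, hvals2])
    have hS2 : (∑ σ : Equiv.Perm (Fin M), ∑ k : Fin M, ((Equiv.Perm.sign σ : ℤ)) •
        (if σ k = q then Pup (Function.update (⇑σ) k p) else 0)) = 0 := by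
      have hform : (∑ σ : Equiv.Perm (Fin M), ∑ k : Fin M, ((Equiv.Perm.sign σ : ℤ)) •
          (if σ k = q then Pup (Function.update (⇑σ) k p) else 0)) =
          ∑ z : Equiv.Perm (Fin M) × Fin M,
            (if z.1 z.2 = q then ((Equiv.Perm.sign z.1 : ℤ)) •
              Pup (Function.update (⇑z.1) z.2 p) else 0) := by
        rw [Fintype.sum_prod_type]
        exact Finset.sum_congr rfl fun σ _ => Finset.sum_congr rfl fun k _ => by
          rw [smul_ite, smul_zero]
      rw [hform]
      refine Finset.sum_involution
        (fun z _ => if hz : z.1 z.2 = q then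
          (z.1 * Equiv.swap z.2 (z.1⁻¹ p), z.1⁻¹ p) else z) ?_ ?_ (fun _ _ => Finset.mem_univ _) ?_
      · -- cancellation in pairs
        intro z _
        by_cases hz : z.1 z.2 = q
        · obtain ⟨σ, k⟩ := z
          simp only at hz ⊢
          rw [dif_pos hz]
          have hk0 : σ (σ⁻¹ p) = p := Equiv.apply_symm_apply σ p
          have hkk0 : k ≠ σ⁻¹ p := fun h => hpq (by rw [← hk0, ← h, hz])
          have cond' : (σ * Equiv.swap k (σ⁻¹ p)) (σ⁻¹ p) = q := by
            rw [Equiv.Perm.mul_apply, Equiv.swap_apply_right, hz]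
          have hsgn' : ((Equiv.Perm.sign (σ * Equiv.swap k (σ⁻¹ p)) : ℤ)) =
              -((Equiv.Perm.sign σ : ℤ)) := by
            rw [Equiv.Perm.sign_mul, Equiv.Perm.sign_swap hkk0]
            push_cast; ring
          have hupd : Function.update (⇑(σ * Equiv.swap k (σ⁻¹ p))) (σ⁻¹ p) p =
              Function.update (⇑σ) k p := by
            funext i
            rcases eq_or_ne i (σ⁻¹ p) with rfl | h1
            · rw [Function.update_self, Function.update_of_ne (Ne.symm hkk0), hk0]
            · rw [Function.update_of_ne h1]
              rcases eq_or_ne i k with rfl | h2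
              · rw [Function.update_self, Equiv.Perm.mul_apply, Equiv.swap_apply_left, hk0]
              · rw [Function.update_of_ne h2, Equiv.Perm.mul_apply,
                  Equiv.swap_apply_of_ne_of_ne h2 h1]
          rw [if_pos hz, if_pos cond', hsgn', hupd, neg_smul]
          exact add_neg_cancel _
        · rw [dif_neg hz, if_neg hz, add_zero]
      · -- the involution has no fixed points on the support
        intro z _ hfz
        beta_reduce
        by_cases hz : z.1 z.2 = q
        · rw [dif_pos hz]
          intro heq
          have h2 := congrArg Prod.snd heq
          simp only at h2
          have hk0 : z.1 (z.1⁻¹ p) = p := Equiv.apply_symm_apply z.1 p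
          exact hpq (by rw [← hk0, h2, hz])
        · exact absurd (if_neg hz) hfz
      · -- involutive
        intro z _
        by_cases hz : z.1 z.2 = q
        · obtain ⟨σ, k⟩ := z
          simp only at hz ⊢
          rw [dif_pos hz]
          have hk0 : σ (σ⁻¹ p) = p := Equiv.apply_symm_apply σ p
          have cond' : (σ * Equiv.swap k (σ⁻¹ p)) (σ⁻¹ p) = q := by
            rw [Equiv.Perm.mul_apply, Equiv.swap_apply_right, hz]
          rw [dif_pos cond']
          have hσ'k : (σ * Equiv.swap k (σ⁻¹ p)) k = p := by
            rw [Equiv.Perm.mul_apply, Equiv.swap_apply_left, hk0]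
          have hinv : (σ * Equiv.swap k (σ⁻¹ p))⁻¹ p = k := by
            have h0 : (σ * Equiv.swap k (σ⁻¹ p))⁻¹ ((σ * Equiv.swap k (σ⁻¹ p)) k) = k :=
              Equiv.symm_apply_apply _ k
            rw [Equiv.Perm.mul_apply, Equiv.swap_apply_left, hk0] at h0
            exact h0
          have hfst : (σ * Equiv.swap k (σ⁻¹ p)) *
              Equiv.swap (σ⁻¹ p) ((σ * Equiv.swap k (σ⁻¹ p))⁻¹ p) = σ := by
            rw [hinv, Equiv.swap_comm (σ⁻¹ p) k, mul_assoc, Equiv.swap_mul_self, mul_one]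
          exact Prod.ext hfst hinv
        · simp only [dif_neg hz]
    rw [hS4, hS2, sub_zero]

end Central

section ModulePart

variable {V : Type} [AddCommGroup V] [Module ℂ V]

lemma listact (u : ℂ) (e : Fin M → Fin M → Module.End ℂ V) (μ : Fin M → ℤ) (v₀ : V)
    (hdiag : ∀ i, e i i v₀ = ((μ i : ℂ)) • v₀) (σ : Equiv.Perm (Fin M)) :
    ∀ l : List (Fin M), (∀ i ∈ l, σ i = i) →
      ((l.map fun i => ent u e (σ i) i i).prod) v₀ =
        ((l.map fun i : Fin M => (u + (i : ℕ) + 1 - M - (μ i : ℂ))).prod) • v₀ := by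
  intro l
  induction l with
  | nil => intro _; simp
  | cons a t ih =>
    intro h
    have ha := h a List.mem_cons_self
    have ht := fun i hi => h i (List.mem_cons_of_mem a hi)
    simp only [List.map_cons, List.prod_cons]
    rw [Module.End.mul_apply, ih ht, map_smul]
    have hone : (ent u e (σ a) a a) v₀ = ((u + (a : ℕ) + 1 - M - (μ a : ℂ))) • v₀ := by
      unfold ent
      rw [ha]
      rw [LinearMap.sub_apply, if_pos rfl, Module.algebraMap_end_apply, hdiag a, ← sub_smul]
    rw [hone, smul_smul, mul_comm]

lemma kill (u : ℂ) (e : Fin M → Fin M → Module.End ℂ V) (μ : Fin M → ℤ) (v₀ : V)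
    (hdiag : ∀ i, e i i v₀ = ((μ i : ℂ)) • v₀)
    (hup : ∀ i j : Fin M, i < j → e i j v₀ = 0)
    (σ : Equiv.Perm (Fin M)) (hσ : σ ≠ 1) :
    (((List.finRange M).map fun i => ent u e (σ i) i i).prod) v₀ = 0 := by
  classical
  set S : Finset (Fin M) := Finset.univ.filter (fun i => σ i ≠ i) with hS
  have hSne : S.Nonempty := by
    by_contra hc
    apply hσ
    apply Equiv.ext
    intro i
    by_contra hne
    exact hc ⟨i, by simp [hS]; simpa using hne⟩
  set j0 : Fin M := S.max' hSne with hj0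
  have hj0S : σ j0 ≠ j0 := by
    have := S.max'_mem hSne
    simpa [hS] using this
  have hfix : ∀ i : Fin M, j0 < i → σ i = i := by
    intro i hi
    by_contra hne
    exact absurd (Finset.le_max' S i (by simp [hS]; exact hne)) (not_le.2 hi)
  have hlt : σ j0 < j0 := by
    rcases lt_trichotomy (σ j0) j0 with h | h | h
    · exact h
    · exact absurd h hj0S
    · have h2 : σ (σ j0) = σ j0 := hfix _ h
      have h3 := congrArg (⇑σ⁻¹) h2
      simp only [Equiv.Perm.coe_inv, Equiv.symm_apply_apply] at h3
      exact absurd h3 hj0S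
  rw [prod_split (fun i => ent u e (σ i) i i) j0]
  have hdropfix : ∀ i ∈ (List.finRange M).drop ((j0 : ℕ) + 1), σ i = i := by
    intro i hi
    have := mem_drop_finRange.1 hi
    exact hfix i (by omega)
  rw [Module.End.mul_apply, Module.End.mul_apply]
  rw [listact u e μ v₀ hdiag σ _ hdropfix, map_smul]
  have hkill : (ent u e (σ j0) j0 j0) v₀ = 0 := by
    unfold ent
    rw [LinearMap.sub_apply, if_neg hj0S, hup (σ j0) j0 hlt]
    simp
  rw [hkill]
  simp

lemma capelli_apply (u : ℂ) (e : Fin M → Fin M → Module.End ℂ V) (μ : Fin M → ℤ) (v₀ : V)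
    (hdiag : ∀ i, e i i v₀ = ((μ i : ℂ)) • v₀)
    (hup : ∀ i j : Fin M, i < j → e i j v₀ = 0) :
    (capelli M u e) v₀ = (∏ i : Fin M, (u - (μ i : ℂ) + (i : ℕ) + 1 - M)) • v₀ := by
  classical
  rw [show capelli M u e = ∑ σ : Equiv.Perm (Fin M), ((Equiv.Perm.sign σ : ℤ) •
    ((List.finRange M).map fun i => ent u e (σ i) i i).prod) from rfl]
  rw [LinearMap.sum_apply]
  rw [Finset.sum_eq_single (1 : Equiv.Perm (Fin M))
    (fun σ _ hσ => by
      rw [LinearMap.smul_apply, kill u e μ v₀ hdiag hup σ hσ, smul_zero])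
    (fun h => absurd (Finset.mem_univ _) h)]
  rw [LinearMap.smul_apply]
  rw [listact u e μ v₀ hdiag 1 (List.finRange M) (fun i _ => rfl)]
  rw [Equiv.Perm.sign_one]
  have : ((List.finRange M).map fun i : Fin M => (u + (i : ℕ) + 1 - M - (μ i : ℂ))).prod =
      ∏ i : Fin M, (u - (μ i : ℂ) + (i : ℕ) + 1 - M) := by
    rw [Fin.prod_univ_def]
    exact congrArg List.prod (List.map_congr_left fun i _ => by ring)
  rw [this]
  simp

end ModulePart

end Cap13

theorem statement13 (M : ℕ) (u : ℂ) :
    (∀ (A : Type) [Ring A] [Algebra ℂ A] (E : Fin M → Fin M → A),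
      (∀ i j p q : Fin M,
        E i j * E p q - E p q * E i j =
          (if p = j then E i q else 0) - (if i = q then E p j else 0)) →
      ∀ p q : Fin M, capelli M u E * E p q = E p q * capelli M u E) ∧
    (∀ (V : Type) [AddCommGroup V] [Module ℂ V]
        (e : Fin M → Fin M → Module.End ℂ V) (μ : Fin M → ℤ),
      Antitone μ →
      (∀ i j p q : Fin M,
        e i j * e p q - e p q * e i j =
          (if p = j then e i q else 0) - (if i = q then e p j else 0)) →
      (∀ W : Submodule ℂ V, (∀ i j, ∀ v ∈ W, e i j v ∈ W) → W = ⊥ ∨ W = ⊤) →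
      ∀ v₀ : V, v₀ ≠ 0 →
        (∀ i : Fin M, e i i v₀ = ((μ i : ℂ)) • v₀) →
        (∀ i j : Fin M, i < j → e i j v₀ = 0) →
        capelli M u e =
          (∏ i : Fin M, (u - (μ i : ℂ) + (i : ℕ) + 1 - M)) • (1 : Module.End ℂ V)) := by
  constructor
  · intro A _ _ E hE p q
    exact sub_eq_zero.mp (Cap13.capelli_comm u E hE p q)
  · intro V _ _ e μ _ hE hirr v₀ hv0 hdiag hup
    have happ := Cap13.capelli_apply u e μ v₀ hdiag hup
    have hcomm : ∀ p q : Fin M, capelli M u e * e p q = e p q * capelli M u e :=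
      fun p q => sub_eq_zero.mp (Cap13.capelli_comm u e hE p q)
    set lam : ℂ := ∏ i : Fin M, (u - (μ i : ℂ) + (i : ℕ) + 1 - M) with hlam
    set W : Submodule ℂ V :=
      LinearMap.ker (capelli M u e - lam • (1 : Module.End ℂ V)) with hW
    have hWinv : ∀ i j, ∀ v ∈ W, e i j v ∈ W := by
      intro i j v hv
      rw [hW, LinearMap.mem_ker, LinearMap.sub_apply, LinearMap.smul_apply,
        Module.End.one_apply] at hv ⊢
      have hv' : capelli M u e v = lam • v := by
        have := sub_eq_zero.mp hv
        exact this
      have h1 : capelli M u e ((e i j) v) = (e i j) (capelli M u e v) := by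
        calc capelli M u e ((e i j) v) = (capelli M u e * e i j) v := rfl
        _ = (e i j * capelli M u e) v := by rw [hcomm i j]
        _ = (e i j) (capelli M u e v) := rfl
      rw [h1, hv', map_smul, sub_self]
    have hv₀W : v₀ ∈ W := by
      rw [hW, LinearMap.mem_ker, LinearMap.sub_apply, LinearMap.smul_apply,
        Module.End.one_apply, happ]
      exact sub_self _
    rcases hirr W hWinv with hbot | htop
    · exact absurd (by rw [hbot] at hv₀W; simpa using hv₀W) hv0
    · have hker : LinearMap.ker (capelli M u e - lam • (1 : Module.End ℂ V)) = ⊤ := by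
        rw [← hW]; exact htop
      exact sub_eq_zero.mp (LinearMap.ker_eq_top.mp hker)
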